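/- arXiv:1804.04704 — 4 statements merged into one kernel-verified Lean document; each statement's English description precedes it below -/
import Mathlib

section
/- Let i, j, t, x be positive integers with i ∣ m, j ∣ n, t ∣ (m/i), t ∣ (n/j), gcd(x, t) = 1 and 1 ≤ x ≤ t. Then the set H_{i,j,t,x} = { (α^{a i}, β^{b j}) : a, b ∈ ℤ, b ≡ a x (mod t) } is a subgroup of 𝕌_m × 𝕌_n; moreover the defining condition is well defined: if α^{a₁ i} = α^{a₂ i} and β^{b₁ j} = β^{b₂ j}, then b₁ − a₁ x ≡ b₂ − a₂ x (mod t). -/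
open MvPolynomial Finset Pointwise

noncomputable section

namespace DuttaPaper

/-- The polynomial ring `K[X,Y]`, with `X = X 0` and `Y = X 1`. -/
abbrev Poly (K : Type) [Field K] : Type := MvPolynomial (Fin 2) K

/-- The rational function field `K(X,Y)`. -/
abbrev RF (K : Type) [Field K] : Type := FractionRing (Poly K)

variable {K : Type} [Field K]

/-- The `K`-algebra endomorphism of `K[X,Y]` sending `X ↦ u • X`, `Y ↦ v • Y`;
this is the action of `(u,v) ∈ 𝕌_m × 𝕌_n` on `K[X,Y]`. -/
def act (u v : K) : Poly K →ₐ[K] Poly K :=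
  MvPolynomial.aeval ![MvPolynomial.C u * MvPolynomial.X 0,
    MvPolynomial.C v * MvPolynomial.X 1]

/-- Membership in the set `H_{i,j,t,x} = {(α^{a i}, β^{b j}) : b ≡ a x (mod t)} ⊆ K × K`. -/
def Hmem (α β : K) (i j t x : ℕ) (p : K × K) : Prop :=
  ∃ a b : ℤ, b ≡ a * (x : ℤ) [ZMOD (t : ℤ)] ∧
    p = (α ^ (a * (i : ℤ)), β ^ (b * (j : ℤ)))

/-- `f ∈ K[X,Y]` is an eigenfunction for `H_{i,j,t,x}`. -/
def IsEigen (α β : K) (i j t x : ℕ) (f : Poly K) : Prop :=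
  ∀ p : K × K, Hmem α β i j t x p → ∃ lam : K, act p.1 p.2 f = lam • f

/-- `f ∈ K[X,Y]` belongs to the invariant ring `A_{i,j,t,x} = K[X,Y]^{H_{i,j,t,x}}`. -/
def Invariant (α β : K) (i j t x : ℕ) (f : Poly K) : Prop :=
  ∀ p : K × K, Hmem α β i j t x p → act p.1 p.2 f = f

/-- A `ℚ`-valued (rational rank 1) valuation on a field `L`: the data of the values of the
nonzero elements (the value of `0` is irrelevant). -/
structure RatVal (L : Type) [Field L] where
  v : L → ℚ
  v_mul : ∀ a b : L, a ≠ 0 → b ≠ 0 → v (a * b) = v a + v b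
  v_add : ∀ a b : L, a ≠ 0 → b ≠ 0 → a + b ≠ 0 → min (v a) (v b) ≤ v (a + b)

/-- Value of a polynomial under a valuation of `K(X,Y)`. -/
def vP (ν : RatVal (RF K)) (f : Poly K) : ℚ :=
  ν.v (algebraMap (Poly K) (RF K) f)

/-- `ν` dominates `R_𝔪 = K[X,Y]_{(X,Y)}` : `ν ≥ 0` on `R_𝔪` and `ν > 0` on its maximal
ideal (expressed on the level of polynomials). -/
def DominatesRm (ν : RatVal (RF K)) : Prop :=
  (∀ f : Poly K, f ≠ 0 → 0 ≤ vP ν f) ∧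
  (∀ f : Poly K, f ≠ 0 → MvPolynomial.constantCoeff f = 0 → 0 < vP ν f)

/-- `ν` is non-discrete: its value group is not a cyclic subgroup of `ℚ`. -/
def Nondiscrete (ν : RatVal (RF K)) : Prop :=
  ¬ ∃ g : ℚ, ∀ z : RF K, z ≠ 0 → ∃ k : ℤ, ν.v z = (k : ℚ) * g

/-- Data of a candidate generating sequence: the polynomials `Q_l` and the numbers `m̄_l`. -/
structure GSData (K : Type) [Field K] where
  Q : ℕ → Poly K
  mbar : ℕ → ℕ

/-- `γ_l = ν(Q_l)`. -/
def GSData.γ (G : GSData K) (ν : RatVal (RF K)) (l : ℕ) : ℚ := vP ν (G.Q l)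

/-- `d(l) = m̄_1 ⋯ m̄_{l-1}` (so `d(1) = 1`). -/
def GSData.d (G : GSData K) (l : ℕ) : ℕ := ∏ k ∈ Finset.Icc 1 (l - 1), G.mbar k

/-- An exponent vector `e` is admissible when `e k < m̄_k` for all `k ≥ 1`. -/
def Adm (G : GSData K) (e : ℕ →₀ ℕ) : Prop := ∀ k, 1 ≤ k → e k < G.mbar k

/-- The monomial `X^{e 0} Q_1^{e 1} Q_2^{e 2} ⋯` in the generating sequence. -/
def Pmon (G : GSData K) (e : ℕ →₀ ℕ) : Poly K := e.prod fun k a => G.Q k ^ a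

/-- The value `Σ_k e k • γ_k` of such a monomial. -/
def evalγ (ν : RatVal (RF K)) (G : GSData K) (e : ℕ →₀ ℕ) : ℚ :=
  e.sum fun k a => (a : ℚ) * G.γ ν k

/-- `(Q_l)_{l≥0}` is a generating sequence for `ν` in `K[X,Y]` (properties (1)–(4) of
Section 2 of the paper, for the algorithm of Cutkosky–Vinh). -/
structure IsGenSeq (ν : RatVal (RF K)) (G : GSData K) : Prop where
  hQ0 : G.Q 0 = MvPolynomial.X 0
  hQ1 : G.Q 1 = MvPolynomial.X 1
  /-- `m̄_l ≥ 1`. -/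
  hmbar_pos : ∀ l, 1 ≤ l → 0 < G.mbar l
  /-- `m̄_l γ_l ∈ G(γ_0, …, γ_{l-1})`. -/
  hmbar_mem : ∀ l, 1 ≤ l → ∃ c : ℕ → ℤ,
      (G.mbar l : ℚ) * G.γ ν l = ∑ k ∈ Finset.range l, (c k : ℚ) * G.γ ν k
  /-- `m̄_l` is minimal with this property. -/
  hmbar_min : ∀ l, 1 ≤ l → ∀ q : ℕ, 0 < q →
      (∃ c : ℕ → ℤ, (q : ℚ) * G.γ ν l = ∑ k ∈ Finset.range l, (c k : ℚ) * G.γ ν k) →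
      G.mbar l ≤ q
  /-- (1) `γ_{l+1} > m̄_l γ_l`. -/
  hgrowth : ∀ l, 1 ≤ l → (G.mbar l : ℚ) * G.γ ν l < G.γ ν (l + 1)
  /-- (2) `Q_l = Y^{d(l)} + (terms of lower Y-degree)`. -/
  hmonic : ∀ l, 1 ≤ l →
      G.Q l - MvPolynomial.X 1 ^ G.d l = 0 ∨
      MvPolynomial.degreeOf 1 (G.Q l - MvPolynomial.X 1 ^ G.d l) < G.d l
  /-- (3), existence and uniqueness of the expansion of any nonzero `f` in terms of the
  admissible monomials `X^{e 0} Q_1^{e 1} ⋯ Q_r^{e r}`, `e k < m̄_k` for `k ≥ 1`. -/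
  hexpand : ∀ f : Poly K, f ≠ 0 →
      ∃! c : (ℕ →₀ ℕ) →₀ K,
        (∀ e ∈ c.support, Adm G e) ∧
        f = c.sum fun e a => MvPolynomial.C a * Pmon G e
  /-- (3), the nonzero terms of the expansion have pairwise distinct values and
  `ν(f)` is the minimum of those values. -/
  hval : ∀ f : Poly K, f ≠ 0 → ∀ c : (ℕ →₀ ℕ) →₀ K,
      (∀ e ∈ c.support, Adm G e) →
      f = (c.sum fun e a => MvPolynomial.C a * Pmon G e) →
      (∀ e ∈ c.support, ∀ e' ∈ c.support, evalγ ν G e = evalγ ν G e' → e = e') ∧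
      ∃ e₀ ∈ c.support, vP ν f = evalγ ν G e₀ ∧
        ∀ e ∈ c.support, evalγ ν G e₀ ≤ evalγ ν G e
  /-- (4) `Q_{l+1} = Q_l^{m̄_l} - λ_l X^{c_0} Y^{c_1} Q_2^{c_2} ⋯ Q_{l-1}^{c_{l-1}}` with
  `0 ≤ c_k < m̄_k` for `k ≥ 1` and `m̄_l γ_l = Σ_{k<l} c_k γ_k`. -/
  hrec : ∀ l, 1 ≤ l → ∃ lam : K, lam ≠ 0 ∧ ∃ cc : ℕ → ℕ,
      (∀ k, 1 ≤ k → k < l → cc k < G.mbar k) ∧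
      G.Q (l + 1) =
        G.Q l ^ G.mbar l - MvPolynomial.C lam * ∏ k ∈ Finset.range l, G.Q k ^ cc k ∧
      (G.mbar l : ℚ) * G.γ ν l = ∑ k ∈ Finset.range l, (cc k : ℚ) * G.γ ν k

/-- The valuation semigroup `S^{R_𝔪}(ν) = {ν(h) : 0 ≠ h ∈ R_𝔪}`. -/
def SRm (ν : RatVal (RF K)) : Set ℚ :=
  {q | ∃ f g : Poly K, f ≠ 0 ∧ MvPolynomial.constantCoeff g ≠ 0 ∧
    q = vP ν f - vP ν g}

/-- The valuation semigroup `S^{(A_{i,j,t,x})_𝔫}(ν)` of the invariant ring localized at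
`𝔫 = (X,Y) ∩ A_{i,j,t,x}`. -/
def SA (ν : RatVal (RF K)) (α β : K) (i j t x : ℕ) : Set ℚ :=
  {q | ∃ f g : Poly K, f ≠ 0 ∧ Invariant α β i j t x f ∧ Invariant α β i j t x g ∧
    MvPolynomial.constantCoeff g ≠ 0 ∧ q = vP ν f - vP ν g}

/-- `S` is a finitely generated module over the subsemigroup `T`:
`S = {s_1, …, s_k} + T` for finitely many `s_i ∈ S`. -/
def FGover (S T : Set ℚ) : Prop :=
  ∃ F : Finset ℚ, (F : Set ℚ) ⊆ S ∧ S = (F : Set ℚ) + T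


/-- `H_{i,j,t,x}` is a well-defined subgroup of `𝕌_m × 𝕌_n`. -/
theorem stmt_0 (K : Type) [Field K] [IsAlgClosed K] [CharZero K]
    (m n : ℕ) (hm : 0 < m) (hn : 0 < n) (α β : K)
    (hα : IsPrimitiveRoot α m) (hβ : IsPrimitiveRoot β n)
    (i j t x : ℕ) (hi : 0 < i) (hj : 0 < j) (ht : 0 < t)
    (him : i ∣ m) (hjn : j ∣ n) (hti : t ∣ m / i) (htj : t ∣ n / j)
    (hxt : Nat.gcd x t = 1) (hx1 : 1 ≤ x) (hxle : x ≤ t) :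
    -- `H` contains the identity
    Hmem α β i j t x ((1 : K), (1 : K)) ∧
    -- `H` is closed under multiplication
    (∀ p q : K × K, Hmem α β i j t x p → Hmem α β i j t x q →
        Hmem α β i j t x (p.1 * q.1, p.2 * q.2)) ∧
    -- `H` is closed under inverses
    (∀ p : K × K, Hmem α β i j t x p → Hmem α β i j t x (p.1⁻¹, p.2⁻¹)) ∧
    -- `H ⊆ 𝕌_m × 𝕌_n`
    (∀ p : K × K, Hmem α β i j t x p → ∃ a b : ℤ, p = (α ^ a, β ^ b)) ∧
    -- the defining congruence condition is well defined
    (∀ a₁ a₂ b₁ b₂ : ℤ, α ^ (a₁ * (i : ℤ)) = α ^ (a₂ * (i : ℤ)) →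
        β ^ (b₁ * (j : ℤ)) = β ^ (b₂ * (j : ℤ)) →
        b₁ - a₁ * (x : ℤ) ≡ b₂ - a₂ * (x : ℤ) [ZMOD (t : ℤ)]) := by
    have hαne : α ≠ 0 := hα.ne_zero hm.ne'
    have hβne : β ≠ 0 := hβ.ne_zero hn.ne'
    -- key well-definedness lemma
    have key : ∀ a₁ a₂ b₁ b₂ : ℤ, α ^ (a₁ * (i : ℤ)) = α ^ (a₂ * (i : ℤ)) →
        β ^ (b₁ * (j : ℤ)) = β ^ (b₂ * (j : ℤ)) →
        b₁ - a₁ * (x : ℤ) ≡ b₂ - a₂ * (x : ℤ) [ZMOD (t : ℤ)] := by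
      intro a₁ a₂ b₁ b₂ hαeq hβeq
      have h1 : α ^ ((a₁ - a₂) * (i : ℤ)) = 1 := by
        rw [sub_mul, zpow_sub₀ hαne, hαeq, div_self (zpow_ne_zero _ hαne)]
      have h2 : β ^ ((b₁ - b₂) * (j : ℤ)) = 1 := by
        rw [sub_mul, zpow_sub₀ hβne, hβeq, div_self (zpow_ne_zero _ hβne)]
      have hd1 : (m : ℤ) ∣ (a₁ - a₂) * (i : ℤ) := (hα.zpow_eq_one_iff_dvd _).mp h1
      have hd2 : (n : ℤ) ∣ (b₁ - b₂) * (j : ℤ) := (hβ.zpow_eq_one_iff_dvd _).mp h2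
      have hmi : (m : ℤ) = (m / i : ℕ) * (i : ℤ) := by
        exact_mod_cast (Nat.div_mul_cancel him).symm
      have hnj : (n : ℤ) = (n / j : ℕ) * (j : ℤ) := by
        exact_mod_cast (Nat.div_mul_cancel hjn).symm
      have hta : (t : ℤ) ∣ (a₁ - a₂) := by
        have : ((m / i : ℕ) : ℤ) ∣ (a₁ - a₂) := by
          rw [hmi] at hd1
          exact (mul_dvd_mul_iff_right (by exact_mod_cast hi.ne' : (i : ℤ) ≠ 0)).mp hd1
        exact dvd_trans (Int.natCast_dvd_natCast.mpr hti) this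
      have htb : (t : ℤ) ∣ (b₁ - b₂) := by
        have : ((n / j : ℕ) : ℤ) ∣ (b₁ - b₂) := by
          rw [hnj] at hd2
          exact (mul_dvd_mul_iff_right (by exact_mod_cast hj.ne' : (j : ℤ) ≠ 0)).mp hd2
        exact dvd_trans (Int.natCast_dvd_natCast.mpr htj) this
      have : (t : ℤ) ∣ (b₂ - a₂ * (x : ℤ)) - (b₁ - a₁ * (x : ℤ)) := by
        have h3 : (b₂ - a₂ * (x : ℤ)) - (b₁ - a₁ * (x : ℤ))
            = -((b₁ - b₂)) + (a₁ - a₂) * (x : ℤ) := by ring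
        rw [h3]
        exact dvd_add (dvd_neg.mpr htb) (hta.mul_right _)
      exact Int.modEq_iff_dvd.mpr this
    refine ⟨⟨0, 0, by simp [Int.ModEq], by simp⟩, ?_, ?_, ?_, key⟩
    · rintro p q ⟨a, b, hab, hp⟩ ⟨a', b', hab', hq⟩
      refine ⟨a + a', b + b', ?_, ?_⟩
      · have := Int.ModEq.add hab hab'
        simpa [add_mul] using this
      · rw [hp, hq]
        simp [add_mul, zpow_add₀ hαne, zpow_add₀ hβne]
    · rintro p ⟨a, b, hab, hp⟩
      refine ⟨-a, -b, ?_, ?_⟩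
      · have := Int.ModEq.neg hab
        simpa [neg_mul] using this
      · rw [hp]
        simp [neg_mul, zpow_neg]
    · rintro p ⟨a, b, hab, hp⟩
      exact ⟨a * i, b * j, by rw [hp]⟩


end DuttaPaper
end
end

section
/- For every subgroup G of 𝕌_m × 𝕌_n there exist positive integers i, j, t, x with i ∣ m, j ∣ n, t ∣ (m/i), t ∣ (n/j), gcd(x, t) = 1 and 1 ≤ x ≤ t such that G = H_{i,j,t,x} = { (α^{a i}, β^{b j}) : a, b ∈ ℤ, b ≡ a x (mod t) }, and the quadruple (i, j, t, x) with these properties is unique. -/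
open MvPolynomial Finset Pointwise

noncomputable section

namespace DuttaPaper

variable {K : Type} [Field K]

namespace Stmt1Aux

/-- The exponent lattice of `H_{i,j,t,x}`. -/
def Lat (i j t x : ℤ) : AddSubgroup (ℤ × ℤ) where
  carrier := {P | ∃ a b : ℤ, b ≡ a * x [ZMOD t] ∧ P.1 = a * i ∧ P.2 = b * j}
  zero_mem' := ⟨0, 0, by simp [Int.ModEq.refl], by simp, by simp⟩
  add_mem' := by
    rintro P Q ⟨a, b, hab, hP1, hP2⟩ ⟨a', b', hab', hQ1, hQ2⟩
    exact ⟨a + a', b + b', by simpa [add_mul] using hab.add hab',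
      by simp [Prod.fst_add, hP1, hQ1, add_mul],
      by simp [Prod.snd_add, hP2, hQ2, add_mul]⟩
  neg_mem' := by
    rintro P ⟨a, b, hab, hP1, hP2⟩
    exact ⟨-a, -b, by simpa [neg_mul] using hab.neg,
      by simp [hP1, neg_mul], by simp [hP2, neg_mul]⟩

lemma mem_Lat {i j t x : ℤ} {P : ℤ × ℤ} :
    P ∈ Lat i j t x ↔ ∃ a b : ℤ, b ≡ a * x [ZMOD t] ∧ P.1 = a * i ∧ P.2 = b * j := Iff.rfl

/-- The set of points of the subgroup with exponent lattice `L`. -/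
def SSet (α β : K) (L : AddSubgroup (ℤ × ℤ)) : Set (K × K) :=
  {p | ∃ P ∈ L, p = (α ^ P.1, β ^ P.2)}

lemma pr_zpow_inj {α : K} {m : ℕ} (hm : 0 < m) (hα : IsPrimitiveRoot α m) {A B : ℤ}
    (h : α ^ A = α ^ B) : (m : ℤ) ∣ A - B := by
  have hα0 : α ≠ 0 := hα.ne_zero hm.ne'
  have h1 : α ^ (A - B) = 1 := by
    rw [zpow_sub₀ hα0, h, div_self (zpow_ne_zero _ hα0)]
  exact (hα.zpow_eq_one_iff_dvd _).mp h1

lemma SSet_inj {α β : K} {m n : ℕ} (hm : 0 < m) (hn : 0 < n)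
    (hα : IsPrimitiveRoot α m) (hβ : IsPrimitiveRoot β n)
    {L1 L2 : AddSubgroup (ℤ × ℤ)}
    (h2m : (((m : ℤ), (0 : ℤ)) : ℤ × ℤ) ∈ L2) (h2n : (((0 : ℤ), (n : ℤ)) : ℤ × ℤ) ∈ L2)
    (hS : SSet α β L1 ⊆ SSet α β L2) : L1 ≤ L2 := by
  intro P hP
  obtain ⟨Q, hQ, hq⟩ := hS ⟨P, hP, rfl⟩
  have h1 : α ^ P.1 = α ^ Q.1 := congrArg Prod.fst hq
  have h2 : β ^ P.2 = β ^ Q.2 := congrArg Prod.snd hq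
  obtain ⟨k, hk⟩ := pr_zpow_inj hm hα h1
  obtain ⟨l, hl⟩ := pr_zpow_inj hn hβ h2
  have hR : ((P.1 - Q.1, P.2 - Q.2) : ℤ × ℤ) ∈ L2 := by
    have he : ((P.1 - Q.1, P.2 - Q.2) : ℤ × ℤ)
        = k • (((m : ℤ), (0 : ℤ)) : ℤ × ℤ) + l • (((0 : ℤ), (n : ℤ)) : ℤ × ℤ) := by
      simp [Prod.ext_iff, smul_eq_mul, hk, hl, mul_comm]
    rw [he]
    exact add_mem (AddSubgroup.zsmul_mem _ h2m k) (AddSubgroup.zsmul_mem _ h2n l)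
  have h3 := add_mem hQ hR
  have he2 : Q + ((P.1 - Q.1, P.2 - Q.2) : ℤ × ℤ) = P := by
    simp [Prod.ext_iff]
  rwa [he2] at h3

lemma int_addSubgroup_dvd (H : AddSubgroup ℤ) : ∃ g : ℤ, 0 ≤ g ∧ ∀ A : ℤ, A ∈ H ↔ g ∣ A := by
  obtain ⟨g0, hg0⟩ := Int.subgroup_cyclic H
  refine ⟨|g0|, abs_nonneg _, fun A => ?_⟩
  rw [hg0, AddSubgroup.mem_closure_singleton]
  simp only [smul_eq_mul]
  constructor
  · rintro ⟨k, rfl⟩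
    exact (abs_dvd _ _).mpr (Dvd.intro_left k rfl)
  · intro h
    obtain ⟨c, rfl⟩ := (abs_dvd _ _).mp h
    exact ⟨c, mul_comm _ _⟩

lemma exists_rep (t y : ℤ) (ht : 0 < t) (hco : IsCoprime y t) :
    ∃ x : ℤ, 1 ≤ x ∧ x ≤ t ∧ IsCoprime x t ∧ x ≡ y [ZMOD t] := by
  by_cases h : y % t = 0
  · have htd : t ∣ y := Int.dvd_of_emod_eq_zero h
    have hu : IsUnit t := hco.isUnit_of_dvd' htd dvd_rfl
    have ht1 : t = 1 := by rcases Int.isUnit_iff.mp hu with h1 | h1 <;> omega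
    refine ⟨1, le_refl 1, by omega, isCoprime_one_left, ?_⟩
    simp [ht1, Int.ModEq]
  · refine ⟨y % t, ?_, ?_, ?_, Int.emod_emod_of_dvd y dvd_rfl⟩
    · have := Int.emod_nonneg y (ne_of_gt ht); omega
    · have := Int.emod_lt_of_pos y ht; omega
    · have he : y % t = y + t * (-(y / t)) := by rw [Int.emod_def]; ring
      rw [he]; exact hco.add_mul_left_left _


lemma lat_fst (i j t x : ℤ) (A : ℤ) :
    (∃ B, ((A, B) : ℤ × ℤ) ∈ Lat i j t x) ↔ i ∣ A := by
  constructor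
  · rintro ⟨B, a, b, hab, hA, hB⟩
    exact ⟨a, by simpa [mul_comm] using hA⟩
  · rintro ⟨a, rfl⟩
    exact ⟨a * x * j, a, a * x, Int.ModEq.refl _, mul_comm i a, rfl⟩

lemma lat_snd {i j t x : ℤ} (hxco : IsCoprime x t) (B : ℤ) :
    (∃ A, ((A, B) : ℤ × ℤ) ∈ Lat i j t x) ↔ j ∣ B := by
  constructor
  · rintro ⟨A, a, b, hab, hA, hB⟩
    exact ⟨b, by simpa [mul_comm] using hB⟩
  · rintro ⟨b, rfl⟩
    obtain ⟨u, v, huv⟩ := hxco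
    refine ⟨b * u * i, b * u, b, ?_, rfl, mul_comm j b⟩
    exact Int.ModEq.symm (Int.modEq_iff_dvd.mpr ⟨b * v, by linear_combination -b * huv⟩)

lemma lat_ker {i j t x : ℤ} (hi : 0 < i) (B : ℤ) :
    (((0 : ℤ), B) : ℤ × ℤ) ∈ Lat i j t x ↔ j * t ∣ B := by
  constructor
  · rintro ⟨a, b, hab, hA, hB⟩
    have ha0 : a = 0 := by
      rcases mul_eq_zero.mp hA.symm with h | h
      · exact h
      · omega
    subst ha0
    have htb : (t : ℤ) ∣ b := by
      have := hab.dvd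
      simpa using this
    obtain ⟨c, rfl⟩ := htb
    exact ⟨c, by linear_combination hB⟩
  · rintro ⟨c, rfl⟩
    refine ⟨0, t * c, ?_, by simp, by ring⟩
    exact Int.modEq_iff_dvd.mpr ⟨-c, by ring⟩

lemma lat_base (i j t x : ℤ) : ((i, x * j) : ℤ × ℤ) ∈ Lat i j t x :=
  ⟨1, x, by simpa using Int.ModEq.refl x, (one_mul i).symm, rfl⟩

lemma lat_contains {m n : ℕ} {i j t x : ℤ} (hi : 0 < i) (hj : 0 < j)
    (hxco : IsCoprime x t)
    (him : i ∣ (m : ℤ)) (hjn : j ∣ (n : ℤ)) (htm : t ∣ (m : ℤ) / i) (htn : t ∣ (n : ℤ) / j) :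
    (((m : ℤ), (0 : ℤ)) : ℤ × ℤ) ∈ Lat i j t x ∧ (((0 : ℤ), (n : ℤ)) : ℤ × ℤ) ∈ Lat i j t x := by
  constructor
  · refine ⟨(m : ℤ) / i, 0, ?_, (Int.ediv_mul_cancel him).symm, (zero_mul j).symm⟩
    exact Int.ModEq.symm (Int.modEq_iff_dvd.mpr (by simpa using htm.mul_right x))
  · refine ⟨0, (n : ℤ) / j, ?_, (zero_mul i).symm, (Int.ediv_mul_cancel hjn).symm⟩
    exact Int.modEq_iff_dvd.mpr (by simpa using htn)

lemma lat_inj {i j t x i' j' t' x' : ℤ}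
    (hi : 0 < i) (hj : 0 < j) (ht : 0 < t) (hx1 : 1 ≤ x) (hxt : x ≤ t) (hxco : IsCoprime x t)
    (hi' : 0 < i') (hj' : 0 < j') (ht' : 0 < t') (hx1' : 1 ≤ x') (hxt' : x' ≤ t')
    (hxco' : IsCoprime x' t')
    (h : Lat i j t x = Lat i' j' t' x') : i = i' ∧ j = j' ∧ t = t' ∧ x = x' := by
  have hii : i = i' := by
    refine Int.dvd_antisymm hi.le hi'.le ?_ ?_
    · exact (lat_fst i j t x i').mp (h ▸ (lat_fst i' j' t' x' i').mpr dvd_rfl)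
    · exact (lat_fst i' j' t' x' i).mp (h ▸ (lat_fst i j t x i).mpr dvd_rfl)
  have hjj : j = j' := by
    refine Int.dvd_antisymm hj.le hj'.le ?_ ?_
    · exact (lat_snd hxco j').mp (h ▸ (lat_snd hxco' j').mpr dvd_rfl)
    · exact (lat_snd hxco' j).mp (h ▸ (lat_snd hxco j).mpr dvd_rfl)
  have htt : t = t' := by
    have h1 : j * t = j' * t' := by
      refine Int.dvd_antisymm (by positivity) (by positivity) ?_ ?_
      · exact (lat_ker hi (j' * t')).mp (h ▸ (lat_ker hi' (j' * t')).mpr dvd_rfl)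
      · exact (lat_ker hi' (j * t)).mp (h ▸ (lat_ker hi (j * t)).mpr dvd_rfl)
    rw [← hjj] at h1
    exact mul_left_cancel₀ hj.ne' h1
  refine ⟨hii, hjj, htt, ?_⟩
  have hb : ((i, x * j) : ℤ × ℤ) ∈ Lat i' j' t' x' := h ▸ lat_base i j t x
  obtain ⟨a, b, hab, hA, hB⟩ := hb
  have ha1 : a = 1 := by
    rw [← hii] at hA
    have h2 : (1 : ℤ) * i = a * i := by simpa using hA
    have := mul_right_cancel₀ hi.ne' h2
    omega
  have hbx : x = b := mul_right_cancel₀ hj.ne' (by rw [← hjj] at hB; exact hB)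
  have hmod : x ≡ x' [ZMOD t] := by
    rw [htt]
    simpa [ha1, hbx] using hab
  obtain ⟨k, hk⟩ := hmod.dvd
  have hk0 : k = 0 := by
    rcases lt_trichotomy k 0 with hh | hh | hh
    · nlinarith
    · exact hh
    · nlinarith
  rw [hk0, mul_zero] at hk
  omega

lemma exists_lat (m n : ℤ) (hm : 0 < m) (hn : 0 < n) (L : AddSubgroup (ℤ × ℤ))
    (hmL : ((m, 0) : ℤ × ℤ) ∈ L) (hnL : ((0, n) : ℤ × ℤ) ∈ L) :
    ∃ i j t x : ℤ, 0 < i ∧ 0 < j ∧ 0 < t ∧ 1 ≤ x ∧ x ≤ t ∧ IsCoprime x t ∧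
      i ∣ m ∧ j ∣ n ∧ t ∣ m / i ∧ t ∣ n / j ∧ L = Lat i j t x := by
  obtain ⟨i, hi0, hK1⟩ := int_addSubgroup_dvd (L.map (AddMonoidHom.fst ℤ ℤ))
  obtain ⟨j, hj0, hK2⟩ := int_addSubgroup_dvd (L.map (AddMonoidHom.snd ℤ ℤ))
  obtain ⟨s, hs0, hK3⟩ := int_addSubgroup_dvd (L.comap (AddMonoidHom.inr ℤ ℤ))
  have hK1' : ∀ A : ℤ, (∃ B, ((A, B) : ℤ × ℤ) ∈ L) ↔ i ∣ A := by
    intro A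
    rw [← hK1]
    simp only [AddSubgroup.mem_map]
    constructor
    · rintro ⟨B, hB⟩; exact ⟨(A, B), hB, rfl⟩
    · rintro ⟨⟨A', B⟩, hB, rfl⟩; exact ⟨B, hB⟩
  have hK2' : ∀ B : ℤ, (∃ A, ((A, B) : ℤ × ℤ) ∈ L) ↔ j ∣ B := by
    intro B
    rw [← hK2]
    simp only [AddSubgroup.mem_map]
    constructor
    · rintro ⟨A, hA⟩; exact ⟨(A, B), hA, rfl⟩
    · rintro ⟨⟨A, B'⟩, hA, rfl⟩; exact ⟨A, hA⟩
  have hK3' : ∀ B : ℤ, (((0 : ℤ), B) : ℤ × ℤ) ∈ L ↔ s ∣ B := fun B => hK3 B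
  have him : i ∣ m := (hK1' m).mp ⟨0, hmL⟩
  have hi : 0 < i := by
    rcases hi0.lt_or_eq with h | h
    · exact h
    · exfalso; rw [← h] at him; omega
  have hjn : j ∣ n := (hK2' n).mp ⟨0, hnL⟩
  have hj : 0 < j := by
    rcases hj0.lt_or_eq with h | h
    · exact h
    · exfalso; rw [← h] at hjn; omega
  have hsn : s ∣ n := (hK3' n).mp hnL
  have hs : 0 < s := by
    rcases hs0.lt_or_eq with h | h
    · exact h
    · exfalso; rw [← h] at hsn; omega
  have hjs : j ∣ s := (hK2' s).mp ⟨0, (hK3' s).mpr dvd_rfl⟩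
  obtain ⟨t, rfl⟩ := hjs
  have ht : 0 < t := by
    by_contra hc
    push_neg at hc
    nlinarith
  obtain ⟨b0, hb0L⟩ : ∃ B, ((i, B) : ℤ × ℤ) ∈ L := (hK1' i).mpr dvd_rfl
  have hjb0 : j ∣ b0 := (hK2' b0).mp ⟨i, hb0L⟩
  obtain ⟨y, rfl⟩ := hjb0
  have hL : ∀ P : ℤ × ℤ, P ∈ L ↔
      ∃ a b : ℤ, b ≡ a * y [ZMOD t] ∧ P.1 = a * i ∧ P.2 = b * j := by
    rintro ⟨A, B⟩
    constructor
    · intro hP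
      have hiA : i ∣ A := (hK1' A).mp ⟨B, hP⟩
      obtain ⟨a, rfl⟩ := hiA
      have hsub : (((0 : ℤ), B - a * (j * y)) : ℤ × ℤ) ∈ L := by
        have h := L.sub_mem hP (AddSubgroup.zsmul_mem L hb0L a)
        have he : ((i * a, B) : ℤ × ℤ) - a • ((i, j * y) : ℤ × ℤ)
            = (((0 : ℤ), B - a * (j * y)) : ℤ × ℤ) := by
          simp [Prod.ext_iff, smul_eq_mul, mul_comm]
        rwa [he] at h
      obtain ⟨c, hc⟩ := (hK3' _).mp hsub
      refine ⟨a, a * y + c * t, ?_, mul_comm i a, ?_⟩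
      · exact Int.modEq_iff_dvd.mpr ⟨-c, by ring⟩
      · linear_combination hc
    · rintro ⟨a, b, hab, hA, hB⟩
      obtain ⟨c, hc⟩ := hab.dvd
      have h1 : (a • ((i, j * y) : ℤ × ℤ) + (-c) • (((0 : ℤ), j * t) : ℤ × ℤ)) ∈ L :=
        add_mem (AddSubgroup.zsmul_mem L hb0L a)
          (AddSubgroup.zsmul_mem L ((hK3' (j * t)).mpr dvd_rfl) (-c))
      have he : ((A, B) : ℤ × ℤ)
          = a • ((i, j * y) : ℤ × ℤ) + (-c) • (((0 : ℤ), j * t) : ℤ × ℤ) := by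
        refine Prod.ext ?_ ?_
        · simpa [smul_eq_mul, mul_comm] using hA
        · show B = a * (j * y) + (-c) * (j * t)
          linear_combination hB - j * hc
      rw [he]
      exact h1
  have hco : IsCoprime y t := by
    obtain ⟨A1, hA1⟩ : ∃ A, ((A, j) : ℤ × ℤ) ∈ L := (hK2' j).mpr dvd_rfl
    obtain ⟨a, b, hab, hA, hB⟩ := (hL (A1, j)).mp hA1
    have hb1 : b = 1 := by
      have h2 : (1 : ℤ) * j = b * j := by simpa using hB
      have := mul_right_cancel₀ hj.ne' h2
      omega
    rw [hb1] at hab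
    obtain ⟨c, hc⟩ := hab.dvd
    exact ⟨a, -c, by linear_combination hc⟩
  obtain ⟨x, hx1, hxt, hxco, hxy⟩ := exists_rep t y ht hco
  have hLx : L = Lat i j t x := by
    ext P
    rw [hL P, mem_Lat]
    constructor
    · rintro ⟨a, b, hab, hA, hB⟩
      exact ⟨a, b, hab.trans ((hxy.mul_left a).symm), hA, hB⟩
    · rintro ⟨a, b, hab, hA, hB⟩
      exact ⟨a, b, hab.trans (hxy.mul_left a), hA, hB⟩
  refine ⟨i, j, t, x, hi, hj, ht, hx1, hxt, hxco, him, hjn, ?_, ?_, hLx⟩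
  · obtain ⟨a, b, hab, hA, hB⟩ := mem_Lat.mp (hLx ▸ hmL : ((m, 0) : ℤ × ℤ) ∈ Lat i j t x)
    have hb0 : b = 0 := by
      rcases mul_eq_zero.mp hB.symm with h | h
      · exact h
      · omega
    rw [hb0] at hab
    have htax : t ∣ a * x := by simpa using hab.dvd
    have hta : t ∣ a := (hxco.symm).dvd_of_dvd_mul_right htax
    have hA' : m = a * i := by simpa using hA
    have hma : m / i = a := by rw [hA']; exact Int.mul_ediv_cancel a hi.ne'
    rw [hma]; exact hta
  · obtain ⟨a, b, hab, hA, hB⟩ := mem_Lat.mp (hLx ▸ hnL : (((0 : ℤ), n) : ℤ × ℤ) ∈ Lat i j t x)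
    have ha0 : a = 0 := by
      rcases mul_eq_zero.mp hA.symm with h | h
      · exact h
      · omega
    rw [ha0] at hab
    have htb : t ∣ b := by simpa using hab.dvd
    have hB' : n = b * j := by simpa using hB
    have hnb : n / j = b := by rw [hB']; exact Int.mul_ediv_cancel b hj.ne'
    rw [hnb]; exact htb

/-- The exponent lattice of a subgroup `G ≤ Kˣ × Kˣ`. -/
def expGrp (α' β' : Kˣ) (G : Subgroup (Kˣ × Kˣ)) : AddSubgroup (ℤ × ℤ) where
  carrier := {P | ((α' ^ P.1, β' ^ P.2) : Kˣ × Kˣ) ∈ G}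
  zero_mem' := by
    show ((α' ^ (0 : ℤ), β' ^ (0 : ℤ)) : Kˣ × Kˣ) ∈ G
    simp only [zpow_zero]
    exact G.one_mem
  add_mem' := by
    intro P Q hP hQ
    have := G.mul_mem hP hQ
    simpa [Prod.fst_add, Prod.snd_add, zpow_add, Prod.mk_mul_mk] using this
  neg_mem' := by
    intro P hP
    have := G.inv_mem hP
    simpa [zpow_neg, Prod.inv_mk] using this

end Stmt1Aux

open Stmt1Aux in
/-- every subgroup of `𝕌_m × 𝕌_n` is `H_{i,j,t,x}` for a unique quadruple
`(i,j,t,x)` satisfying the divisibility and coprimality conditions. -/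
theorem stmt_1 (K : Type) [Field K] [IsAlgClosed K] [CharZero K]
    (m n : ℕ) (hm : 0 < m) (hn : 0 < n) (α β : K)
    (hα : IsPrimitiveRoot α m) (hβ : IsPrimitiveRoot β n)
    (α' β' : Kˣ) (hα' : (α' : K) = α) (hβ' : (β' : K) = β)
    (G : Subgroup (Kˣ × Kˣ))
    (hG : G ≤ (Subgroup.zpowers α').prod (Subgroup.zpowers β')) :
    ∃! q : ℕ × ℕ × ℕ × ℕ,
      0 < q.1 ∧ 0 < q.2.1 ∧ 0 < q.2.2.1 ∧ 1 ≤ q.2.2.2 ∧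
      q.1 ∣ m ∧ q.2.1 ∣ n ∧ q.2.2.1 ∣ m / q.1 ∧ q.2.2.1 ∣ n / q.2.1 ∧
      Nat.gcd q.2.2.2 q.2.2.1 = 1 ∧ q.2.2.2 ≤ q.2.2.1 ∧
      {p : K × K | ∃ u ∈ G, (((u : Kˣ × Kˣ).1 : K), ((u : Kˣ × Kˣ).2 : K)) = p} =
        {p : K × K | Hmem α β q.1 q.2.1 q.2.2.1 q.2.2.2 p} := by
  -- the Hmem sets as SSets
  have hmemset : ∀ i j t x : ℕ,
      {p : K × K | Hmem α β i j t x p} = SSet α β (Lat (i : ℤ) (j : ℤ) (t : ℤ) (x : ℤ)) := by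
    intro i j t x
    ext p
    constructor
    · rintro ⟨a, b, hab, rfl⟩
      exact ⟨(a * (i : ℤ), b * (j : ℤ)), ⟨a, b, hab, rfl, rfl⟩, rfl⟩
    · rintro ⟨P, ⟨a, b, hab, h1, h2⟩, rfl⟩
      exact ⟨a, b, hab, by rw [h1, h2]⟩
  -- the exponent lattice of G
  set L : AddSubgroup (ℤ × ℤ) := expGrp α' β' G with hLdef
  have hunit : ∀ (u : Kˣ) (k : ℤ), ((u ^ k : Kˣ) : K) = (u : K) ^ k :=
    fun u k => Units.val_zpow_eq_zpow_val u k
  have hmL : (((m : ℤ), (0 : ℤ)) : ℤ × ℤ) ∈ L := by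
    show ((α' ^ (m : ℤ), β' ^ (0 : ℤ)) : Kˣ × Kˣ) ∈ G
    have h1 : α' ^ (m : ℤ) = 1 := by
      ext
      rw [hunit, hα']
      exact_mod_cast hα.pow_eq_one
    rw [h1, zpow_zero]
    exact G.one_mem
  have hnL : (((0 : ℤ), (n : ℤ)) : ℤ × ℤ) ∈ L := by
    show ((α' ^ (0 : ℤ), β' ^ (n : ℤ)) : Kˣ × Kˣ) ∈ G
    have h1 : β' ^ (n : ℤ) = 1 := by
      ext
      rw [hunit, hβ']
      exact_mod_cast hβ.pow_eq_one
    rw [h1, zpow_zero]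
    exact G.one_mem
  -- the G-set as an SSet
  have hGset : {p : K × K | ∃ u ∈ G, (((u : Kˣ × Kˣ).1 : K), ((u : Kˣ × Kˣ).2 : K)) = p}
      = SSet α β L := by
    ext p
    constructor
    · rintro ⟨u, huG, rfl⟩
      obtain ⟨hu1, hu2⟩ := Subgroup.mem_prod.mp (hG huG)
      obtain ⟨a, ha⟩ := Subgroup.mem_zpowers_iff.mp hu1
      obtain ⟨b, hb⟩ := Subgroup.mem_zpowers_iff.mp hu2
      refine ⟨(a, b), ?_, ?_⟩
      · show ((α' ^ a, β' ^ b) : Kˣ × Kˣ) ∈ G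
        rw [ha, hb]
        simpa using huG
      · rw [← ha, ← hb]
        simp [hunit, hα', hβ']
    · rintro ⟨⟨a, b⟩, hP, rfl⟩
      exact ⟨(α' ^ a, β' ^ b), hP, by simp [hunit, hα', hβ']⟩
  obtain ⟨i, j, t, x, hi, hj, ht, hx1, hxt, hxco, him, hjn, htm, htn, hLx⟩ :=
    exists_lat (m : ℤ) (n : ℤ) (by exact_mod_cast hm) (by exact_mod_cast hn) L hmL hnL
  have hmq : (((m : ℤ), (0 : ℤ)) : ℤ × ℤ) ∈ Lat i j t x := hLx ▸ hmL
  have hnq : (((0 : ℤ), (n : ℤ)) : ℤ × ℤ) ∈ Lat i j t x := hLx ▸ hnL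
  set iN := i.toNat with hiNdef
  set jN := j.toNat with hjNdef
  set tN := t.toNat with htNdef
  set xN := x.toNat with hxNdef
  have hiN : (iN : ℤ) = i := Int.toNat_of_nonneg hi.le
  have hjN : (jN : ℤ) = j := Int.toNat_of_nonneg hj.le
  have htN : (tN : ℤ) = t := Int.toNat_of_nonneg ht.le
  have hxN : (xN : ℤ) = x := Int.toNat_of_nonneg (by omega)
  have hiNpos : 0 < iN := by omega
  have hjNpos : 0 < jN := by omega
  have htNpos : 0 < tN := by omega
  have hxN1 : 1 ≤ xN := by omega
  have hxtN : xN ≤ tN := by omega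
  have himN : iN ∣ m := by
    have h5 : (iN : ℤ) ∣ (m : ℤ) := hiN ▸ him
    exact_mod_cast h5
  have hjnN : jN ∣ n := by
    have h5 : (jN : ℤ) ∣ (n : ℤ) := hjN ▸ hjn
    exact_mod_cast h5
  have htmN : tN ∣ m / iN := by
    have h5 : (tN : ℤ) ∣ ((m / iN : ℕ) : ℤ) := by
      rw [Int.natCast_div, hiN, htN]; exact htm
    exact_mod_cast h5
  have htnN : tN ∣ n / jN := by
    have h5 : (tN : ℤ) ∣ ((n / jN : ℕ) : ℤ) := by
      rw [Int.natCast_div, hjN, htN]; exact htn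
    exact_mod_cast h5
  have hgcdN : Nat.gcd xN tN = 1 := by
    have h5 : Int.gcd x t = 1 := Int.isCoprime_iff_gcd_eq_one.mp hxco
    rw [← hxN, ← htN, Int.gcd_natCast_natCast] at h5
    exact h5
  have hsetN : {p : K × K | ∃ u ∈ G, (((u : Kˣ × Kˣ).1 : K), ((u : Kˣ × Kˣ).2 : K)) = p}
      = {p : K × K | Hmem α β iN jN tN xN p} := by
    rw [hGset, hLx, hmemset iN jN tN xN, hiN, hjN, htN, hxN]
  refine ⟨(iN, jN, tN, xN), ⟨hiNpos, hjNpos, htNpos, hxN1, himN, hjnN, htmN, htnN, hgcdN,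
    hxtN, hsetN⟩, ?_⟩
  rintro ⟨i', j', t', x'⟩ ⟨hi', hj', ht', hx1', him', hjn', htm', htn', hgcd', hxt', hset'⟩
  dsimp only at hi' hj' ht' hx1' him' hjn' htm' htn' hgcd' hxt' hset'
  have hi'Z : (0 : ℤ) < (i' : ℤ) := by exact_mod_cast hi'
  have hj'Z : (0 : ℤ) < (j' : ℤ) := by exact_mod_cast hj'
  have ht'Z : (0 : ℤ) < (t' : ℤ) := by exact_mod_cast ht'
  have hx1'Z : (1 : ℤ) ≤ (x' : ℤ) := by exact_mod_cast hx1'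
  have hxt'Z : ((x' : ℤ)) ≤ (t' : ℤ) := by exact_mod_cast hxt'
  have hxco' : IsCoprime ((x' : ℤ)) ((t' : ℤ)) := by
    rw [Int.isCoprime_iff_gcd_eq_one, Int.gcd_natCast_natCast]
    exact hgcd'
  have htm'Z : ((t' : ℤ)) ∣ (m : ℤ) / (i' : ℤ) := by
    have h5 : ((t' : ℕ) : ℤ) ∣ ((m / i' : ℕ) : ℤ) := Int.natCast_dvd_natCast.mpr htm'
    rwa [Int.natCast_div] at h5
  have htn'Z : ((t' : ℤ)) ∣ (n : ℤ) / (j' : ℤ) := by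
    have h5 : ((t' : ℕ) : ℤ) ∣ ((n / j' : ℕ) : ℤ) := Int.natCast_dvd_natCast.mpr htn'
    rwa [Int.natCast_div] at h5
  obtain ⟨hcm, hcn⟩ := lat_contains hi'Z hj'Z hxco'
    (Int.natCast_dvd_natCast.mpr him') (Int.natCast_dvd_natCast.mpr hjn') htm'Z htn'Z
  have hSS : SSet α β (Lat (i' : ℤ) (j' : ℤ) (t' : ℤ) (x' : ℤ)) = SSet α β (Lat i j t x) := by
    rw [← hmemset, ← hset', hGset, hLx]
  have hLL : Lat (i' : ℤ) (j' : ℤ) (t' : ℤ) (x' : ℤ) = Lat i j t x := by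
    apply le_antisymm
    · exact SSet_inj hm hn hα hβ hmq hnq (le_of_eq hSS)
    · exact SSet_inj hm hn hα hβ hcm hcn (le_of_eq hSS.symm)
  obtain ⟨e1, e2, e3, e4⟩ := lat_inj hi'Z hj'Z ht'Z hx1'Z hxt'Z hxco'
    hi hj ht hx1 hxt hxco hLL
  simp only [Prod.mk.injEq]
  refine ⟨by omega, by omega, by omega, by omega⟩

end DuttaPaper
end
end

section
/- Suppose gcd(m/i, n/j) = t, and write m/i = M t and n/j = N t with M, N positive integers (so gcd(M, N) = 1). Then the subgroup H_{i,j,t,x} has order M N t. -/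
open MvPolynomial Finset Pointwise

noncomputable section

namespace DuttaPaper

variable {K : Type} [Field K]

lemma zpow_eq_zpow_iff_aux {K : Type} [Field K] {ζ : K} {n : ℕ} (hn : 0 < n)
    (h : IsPrimitiveRoot ζ n) {a b : ℤ} : ζ ^ a = ζ ^ b ↔ a ≡ b [ZMOD (n : ℤ)] := by
  have hζ0 : ζ ≠ 0 := h.ne_zero hn.ne'
  rw [Int.modEq_iff_dvd, ← h.zpow_eq_one_iff_dvd, zpow_sub₀ hζ0,
    div_eq_one_iff_eq (zpow_ne_zero _ hζ0)]
  exact eq_comm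

/-- if `gcd(m/i, n/j) = t`, `m/i = M t`, `n/j = N t` with `gcd(M,N) = 1`,
then `|H_{i,j,t,x}| = M N t`. -/
theorem stmt_2 (K : Type) [Field K] [IsAlgClosed K] [CharZero K]
    (m n : ℕ) (hm : 0 < m) (hn : 0 < n) (α β : K)
    (hα : IsPrimitiveRoot α m) (hβ : IsPrimitiveRoot β n)
    (i j t x : ℕ) (hi : 0 < i) (hj : 0 < j) (ht : 0 < t)
    (him : i ∣ m) (hjn : j ∣ n) (hti : t ∣ m / i) (htj : t ∣ n / j)
    (hxt : Nat.gcd x t = 1) (hx1 : 1 ≤ x) (hxle : x ≤ t)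
    (hgcd : Nat.gcd (m / i) (n / j) = t)
    (M N : ℕ) (hM : 0 < M) (hN : 0 < N)
    (hMt : m / i = M * t) (hNt : n / j = N * t) (hMN : Nat.gcd M N = 1) :
    Set.ncard {p : K × K | Hmem α β i j t x p} = M * N * t := by
  have hMt0 : 0 < M * t := Nat.mul_pos hM ht
  have hNt0 : 0 < N * t := Nat.mul_pos hN ht
  haveI : NeZero (M * t) := ⟨hMt0.ne'⟩
  haveI : NeZero N := ⟨hN.ne'⟩
  set ζ := α ^ i with hζdef
  set η := β ^ j with hηdef
  have hζ : IsPrimitiveRoot ζ (M * t) :=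
    hα.pow hm (by rw [← hMt, Nat.mul_div_cancel' him])
  have hη : IsPrimitiveRoot η (N * t) :=
    hβ.pow hn (by rw [← hNt, Nat.mul_div_cancel' hjn])
  set F : ZMod (M * t) × ZMod N → K × K :=
    fun p => (ζ ^ p.1.val, η ^ (p.1.val * x + t * p.2.val)) with hFdef
  -- injectivity of F
  have hinj : Function.Injective F := by
    rintro ⟨a1, c1⟩ ⟨a2, c2⟩ hEq
    have h1 : ζ ^ a1.val = ζ ^ a2.val := congrArg Prod.fst hEq
    have ha : a1 = a2 :=
      ZMod.val_injective _ (hζ.pow_inj (ZMod.val_lt a1) (ZMod.val_lt a2) h1)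
    subst ha
    have h2 : η ^ (a1.val * x + t * c1.val) = η ^ (a1.val * x + t * c2.val) :=
      congrArg Prod.snd hEq
    have h3 : ((a1.val * x + t * c1.val : ℕ) : ℤ) ≡ ((a1.val * x + t * c2.val : ℕ) : ℤ)
        [ZMOD ((N * t : ℕ) : ℤ)] := by
      have := (zpow_eq_zpow_iff_aux hNt0 hη
        (a := (a1.val * x + t * c1.val : ℕ)) (b := (a1.val * x + t * c2.val : ℕ))).mp
        (by push_cast [zpow_natCast]; exact_mod_cast h2)
      exact_mod_cast this
    have h4 : a1.val * x + t * c1.val ≡ a1.val * x + t * c2.val [MOD N * t] :=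
      Int.natCast_modEq_iff.mp (by exact_mod_cast h3)
    have h5 : t * c1.val ≡ t * c2.val [MOD t * N] := by
      have := Nat.ModEq.add_left_cancel' (a1.val * x) h4
      rwa [Nat.mul_comm N t] at this
    have h6 : c1.val ≡ c2.val [MOD N] := Nat.ModEq.mul_left_cancel' ht.ne' h5
    have : c1.val = c2.val := h6.eq_of_lt_of_lt (ZMod.val_lt c1) (ZMod.val_lt c2)
    exact Prod.ext rfl (ZMod.val_injective _ this)
  -- the set equals the range of F
  have key : ∀ (a : ℤ), ζ ^ a = ζ ^ (((a : ZMod (M * t)).val : ℤ)) := by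
    intro a
    rw [zpow_eq_zpow_iff_aux hMt0 hζ, ← ZMod.intCast_eq_intCast_iff]
    push_cast [ZMod.natCast_val, ZMod.cast_id]
    rfl
  have hset : {p : K × K | Hmem α β i j t x p} = Set.range F := by
    ext p
    constructor
    · rintro ⟨a, b, hab, rfl⟩
      set a₀ : ZMod (M * t) := (a : ZMod (M * t)) with ha₀
      have hamod : (a₀.val : ℤ) ≡ a [ZMOD ((M * t : ℕ) : ℤ)] := by
        rw [← ZMod.intCast_eq_intCast_iff]
        push_cast [ZMod.natCast_val, ZMod.cast_id]
        rfl
      have hbt : b ≡ (a₀.val : ℤ) * x [ZMOD (t : ℤ)] := by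
        refine hab.trans ?_
        exact Int.ModEq.mul_right _ ((hamod.of_dvd
          (show ((t : ℕ) : ℤ) ∣ ((M * t : ℕ) : ℤ) by exact_mod_cast dvd_mul_left t M)).symm)
      obtain ⟨d, hd⟩ : (t : ℤ) ∣ b - (a₀.val : ℤ) * x := hbt.symm.dvd
      set c : ZMod N := (d : ZMod N) with hc
      have hdc : (c.val : ℤ) ≡ d [ZMOD ((N : ℕ) : ℤ)] := by
        rw [← ZMod.intCast_eq_intCast_iff]
        push_cast [ZMod.natCast_val, ZMod.cast_id]
        rfl
      refine ⟨(a₀, c), ?_⟩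
      have hfst : ζ ^ (a₀.val) = α ^ (a * (i : ℤ)) := by
        rw [mul_comm a, zpow_mul, zpow_natCast]
        rw [← hζdef, key a, zpow_natCast]
      have hsnd : η ^ (a₀.val * x + t * c.val) = β ^ (b * (j : ℤ)) := by
        rw [mul_comm b, zpow_mul, zpow_natCast, ← hηdef]
        have : ((a₀.val * x + t * c.val : ℕ) : ℤ) ≡ b [ZMOD ((N * t : ℕ) : ℤ)] := by
          rw [Int.modEq_iff_dvd]
          have heq : b - ((a₀.val * x + t * c.val : ℕ) : ℤ) = t * (d - c.val) := by
            push_cast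
            linear_combination hd
          obtain ⟨k, hk⟩ : (N : ℤ) ∣ d - (c.val : ℤ) := hdc.dvd
          exact ⟨k, by rw [heq, hk]; push_cast; ring⟩
        have := (zpow_eq_zpow_iff_aux hNt0 hη).mpr this
        rw [zpow_natCast] at this
        exact this
      exact Prod.ext hfst hsnd
    · rintro ⟨⟨a₀, c⟩, rfl⟩
      refine ⟨(a₀.val : ℤ), ((a₀.val * x + t * c.val : ℕ) : ℤ), ?_, ?_⟩
      · rw [Int.modEq_iff_dvd]
        exact ⟨-(c.val : ℤ), by push_cast; ring⟩
      · refine Prod.ext ?_ ?_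
        · show ζ ^ a₀.val = α ^ ((a₀.val : ℤ) * (i : ℤ))
          rw [hζdef, mul_comm ((a₀.val : ℕ) : ℤ), zpow_mul, zpow_natCast, zpow_natCast]
        · show η ^ (a₀.val * x + t * c.val) = β ^ (((a₀.val * x + t * c.val : ℕ) : ℤ) * (j : ℤ))
          rw [hηdef, mul_comm (((a₀.val * x + t * c.val : ℕ) : ℕ) : ℤ), zpow_mul, zpow_natCast,
            zpow_natCast]
  rw [hset, ← Nat.card_coe_set_eq, Nat.card_range_of_injective hinj, Nat.card_prod,
    Nat.card_zmod, Nat.card_zmod]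
  ring

end DuttaPaper
end
end

section
/- Suppose ν has a generating sequence Q_0 = X, Q_1 = Y, Q_2, … in which every Q_l is an eigenfunction for H_{i,j,t,x}. Then the valuation semigroup of the localized invariant ring is S^{(A_{i,j,t,x})_𝔫}(ν) = { l γ_0 + j_1 γ_1 + ⋯ + j_r γ_r : l ∈ ℕ, r ∈ ℕ, 0 ≤ j_k < m̄_k for k = 1, …, r, and α^{l a i} β^{b j (Σ_{k=1}^{r} j_k d(k))} = 1 for all integers a, b with b ≡ a x (mod t) }. -/
open MvPolynomial Finset Pointwise

noncomputable section

namespace DuttaPaper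

variable {K : Type} [Field K]

variable {K : Type} [Field K]

lemma act_monomial (u v : K) (s : Fin 2 →₀ ℕ) (c : K) :
    act u v (monomial s c) = C (u ^ s 0 * v ^ s 1) * monomial s c := by
  rw [act, aeval_monomial, monomial_eq]
  rw [Finsupp.prod_fintype _ _ (fun i => pow_zero _),
    Finsupp.prod_fintype _ _ (fun i => pow_zero _)]
  simp only [Fin.prod_univ_two, Matrix.cons_val_zero, Matrix.cons_val_one, Matrix.head_cons,
    algebraMap_eq, mul_pow, ← C_pow, C_mul]
  ring

lemma coeff_act (u v : K) (f : Poly K) (s : Fin 2 →₀ ℕ) :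
    coeff s (act u v f) = u ^ s 0 * v ^ s 1 * coeff s f := by
  conv_lhs => rw [f.as_sum, map_sum]
  rw [coeff_sum]
  simp only [act_monomial, coeff_C_mul, coeff_monomial]
  rw [Finset.sum_congr rfl (fun t _ => by rw [mul_ite, mul_zero] :
    ∀ t ∈ f.support, (u ^ t 0 * v ^ t 1) * (if t = s then coeff t f else 0)
      = if t = s then (u ^ t 0 * v ^ t 1) * coeff t f else 0)]
  rw [Finset.sum_ite_eq' f.support s]
  split_ifs with h
  · rfl
  · rw [MvPolynomial.notMem_support_iff.mp h, mul_zero]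

lemma act_C (u v c : K) : act u v (C c) = C c := by
  simp [act, algebraMap_eq]

lemma d_pos (G : GSData K) (h : ∀ k, 1 ≤ k → 0 < G.mbar k) (l : ℕ) : 0 < G.d l :=
  Finset.prod_pos fun k hk => h k (Finset.mem_Icc.mp hk).1

lemma coeff_Q {ν : RatVal (RF K)} {G : GSData K} (hG : IsGenSeq ν G) (k : ℕ) (hk : 1 ≤ k) :
    coeff (Finsupp.single 1 (G.d k)) (G.Q k) = 1 := by
  have hd := d_pos G hG.hmbar_pos k
  have h1 : coeff (Finsupp.single 1 (G.d k)) ((X 1 : Poly K) ^ G.d k) = 1 := by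
    simp [MvPolynomial.coeff_X_pow]
  rcases hG.hmonic k hk with h | h
  · rw [sub_eq_zero.mp h, h1]
  · have h0 : coeff (Finsupp.single 1 (G.d k)) (G.Q k - X 1 ^ G.d k) = 0 := by
      by_contra hc
      have := (MvPolynomial.degreeOf_lt_iff hd).mp h _ (mem_support_iff.mpr hc)
      simp at this
    rw [MvPolynomial.coeff_sub, h1, sub_eq_zero] at h0
    exact h0

lemma Q_ne_zero {ν : RatVal (RF K)} {G : GSData K} (hG : IsGenSeq ν G) (k : ℕ) :
    G.Q k ≠ 0 := by
  rcases Nat.eq_zero_or_pos k with rfl | hk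
  · rw [hG.hQ0]; exact MvPolynomial.X_ne_zero 0
  · intro h0
    have := coeff_Q hG k hk
    rw [h0] at this
    simp at this

lemma act_Qk {ν : RatVal (RF K)} {G : GSData K} (hG : IsGenSeq ν G)
    {u v : K} {k : ℕ} (hk : 1 ≤ k) (hev : ∃ lam : K, act u v (G.Q k) = lam • (G.Q k)) :
    act u v (G.Q k) = C (v ^ G.d k) * G.Q k := by
  obtain ⟨lam, hlam⟩ := hev
  have hc := congrArg (coeff (Finsupp.single 1 (G.d k))) hlam
  rw [coeff_act, coeff_Q hG k hk, MvPolynomial.coeff_smul, coeff_Q hG k hk] at hc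
  simp only [Finsupp.single_apply, smul_eq_mul, mul_one] at hc
  norm_num at hc
  rw [hlam, ← hc, smul_eq_C_mul]

lemma act_Q0 {ν : RatVal (RF K)} {G : GSData K} (hG : IsGenSeq ν G) (u v : K) :
    act u v (G.Q 0) = C u * G.Q 0 := by
  rw [hG.hQ0]
  simp [act]

lemma algMap_ne_zero {f : Poly K} (hf : f ≠ 0) :
    algebraMap (Poly K) (RF K) f ≠ 0 :=
  (map_ne_zero_iff _ (IsFractionRing.injective (Poly K) (RF K))).mpr hf

lemma vP_mul (ν : RatVal (RF K)) {f g : Poly K} (hf : f ≠ 0) (hg : g ≠ 0) :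
    vP ν (f * g) = vP ν f + vP ν g := by
  unfold vP
  rw [map_mul]
  exact ν.v_mul _ _ (algMap_ne_zero hf) (algMap_ne_zero hg)

lemma RatVal.v_one' {L : Type} [Field L] (ν : RatVal L) : ν.v 1 = 0 := by
  have := ν.v_mul 1 1 one_ne_zero one_ne_zero
  rw [mul_one] at this
  linarith

lemma vP_one (ν : RatVal (RF K)) : vP ν (1 : Poly K) = 0 := by
  unfold vP
  rw [map_one, RatVal.v_one']

lemma vP_pow (ν : RatVal (RF K)) {f : Poly K} (hf : f ≠ 0) (a : ℕ) :
    vP ν (f ^ a) = a * vP ν f := by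
  induction a with
  | zero => simp [vP_one]
  | succ a ih =>
    rw [pow_succ, vP_mul ν (pow_ne_zero a hf) hf, ih]
    push_cast
    ring

lemma vP_prod (ν : RatVal (RF K)) {ι : Type} (s : Finset ι) (g : ι → Poly K)
    (h : ∀ i ∈ s, g i ≠ 0) :
    vP ν (∏ i ∈ s, g i) = ∑ i ∈ s, vP ν (g i) := by
  classical
  induction s using Finset.induction with
  | empty => simp [vP_one]
  | @insert a s ha ih =>
    rw [Finset.prod_insert ha, Finset.sum_insert ha,
      vP_mul ν (h a (Finset.mem_insert_self a s))
        (Finset.prod_ne_zero_iff.mpr fun i hi => h i (Finset.mem_insert_of_mem hi)),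
      ih fun i hi => h i (Finset.mem_insert_of_mem hi)]

lemma RatVal.v_neg' {L : Type} [Field L] (ν : RatVal L) {z : L} (hz : z ≠ 0) :
    ν.v (-z) = ν.v z := by
  have h1 : ν.v (-1 : L) = 0 := by
    have := ν.v_mul (-1) (-1) (by norm_num) (by norm_num)
    rw [neg_one_mul, neg_neg, RatVal.v_one'] at this
    linarith
  rw [← neg_one_mul, ν.v_mul (-1) z (by norm_num) hz, h1, zero_add]

lemma vP_C (ν : RatVal (RF K)) (hdom : DominatesRm ν) {c : K} (hc : c ≠ 0) :
    vP ν (C c : Poly K) = 0 := by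
  have h1 : vP ν ((C c : Poly K) * C c⁻¹) = 0 := by
    rw [← C_mul, mul_inv_cancel₀ hc, C_1, vP_one]
  rw [vP_mul ν (by simpa using hc) (by simpa using inv_ne_zero hc)] at h1
  have h2 := hdom.1 (C c) (by simpa using hc)
  have h3 := hdom.1 (C c⁻¹) (by simpa using inv_ne_zero hc)
  linarith

set_option maxHeartbeats 800000 in
set_option synthInstance.maxHeartbeats 200000 in
lemma vP_const (ν : RatVal (RF K)) (hdom : DominatesRm ν) {g : Poly K}
    (hg : constantCoeff g ≠ 0) : vP ν g = 0 := by
  set c := constantCoeff g with hc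
  have hg0 : g ≠ 0 := fun h0 => hg (by rw [hc, h0, map_zero])
  have hCc : vP ν (C c : Poly K) = 0 := vP_C ν hdom hg
  by_cases h0 : g - C c = 0
  · rw [sub_eq_zero.mp h0, hCc]
  · have hch : constantCoeff (g - C c) = 0 := by
      rw [map_sub, constantCoeff_C, ← hc, sub_self]
    have hpos := hdom.2 _ h0 hch
    have hge := hdom.1 g hg0
    have hsum : g + -(g - C c) = C c := by ring
    have key := ν.v_add (algebraMap (Poly K) (RF K) g)
        (algebraMap (Poly K) (RF K) (-(g - C c)))
        (algMap_ne_zero hg0) (algMap_ne_zero (neg_ne_zero.mpr h0))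
        (by rw [← map_add, hsum]; exact algMap_ne_zero (by simpa using hg))
    rw [← map_add, hsum] at key
    rw [map_neg, RatVal.v_neg' ν (algMap_ne_zero h0)] at key
    have hmin : min (vP ν g) (vP ν (g - C c)) ≤ 0 := by
      rw [show (0:ℚ) = vP ν (C c : Poly K) from hCc.symm]; exact key
    rcases min_le_iff.mp hmin with h | h <;> linarith

/-- weighted degree `Σ_{k ≥ 1} d k * e k`. -/
def Dsum (G : GSData K) (e : ℕ →₀ ℕ) : ℕ := ∑ k ∈ e.support.erase 0, G.d k * e k

lemma scal_eq (G : GSData K) (u v : K) (e : ℕ →₀ ℕ) :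
    ∏ k ∈ e.support, (if k = 0 then u else v ^ G.d k) ^ e k
      = u ^ e 0 * v ^ Dsum G e := by
  have herase : ∏ k ∈ e.support.erase 0, (if k = 0 then u else v ^ G.d k) ^ e k
      = v ^ Dsum G e := by
    rw [Dsum, ← Finset.prod_pow_eq_pow_sum]
    refine Finset.prod_congr rfl fun k hk => ?_
    rw [if_neg (Finset.mem_erase.mp hk).1, ← pow_mul]
  by_cases h0 : (0 : ℕ) ∈ e.support
  · rw [← Finset.mul_prod_erase _ _ h0, herase]
    simp
  · rw [Finsupp.notMem_support_iff.mp h0, pow_zero, one_mul,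
      ← Finset.erase_eq_of_notMem h0, herase]

lemma act_Pmon {ν : RatVal (RF K)} {G : GSData K} (hG : IsGenSeq ν G) {u v : K}
    (hev : ∀ k, ∃ lam : K, act u v (G.Q k) = lam • G.Q k) (e : ℕ →₀ ℕ) :
    act u v (Pmon G e) = C (u ^ e 0 * v ^ Dsum G e) * Pmon G e := by
  have hfac : ∀ k ∈ e.support, act u v (G.Q k ^ e k)
      = C ((if k = 0 then u else v ^ G.d k) ^ e k) * G.Q k ^ e k := by
    intro k _
    rw [map_pow]
    rcases Nat.eq_zero_or_pos k with rfl | hk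
    · rw [act_Q0 hG, if_pos rfl, mul_pow, ← C_pow]
    · rw [act_Qk hG hk (hev k), if_neg (Nat.pos_iff_ne_zero.mp hk), mul_pow, ← C_pow]
  have : Pmon G e = ∏ k ∈ e.support, G.Q k ^ e k := rfl
  rw [this, map_prod, Finset.prod_congr rfl hfac, Finset.prod_mul_distrib]
  congr 1
  rw [← scal_eq G u v e]
  exact (map_prod (C : K →+* Poly K) _ e.support).symm

lemma scal_one {ν : RatVal (RF K)} {G : GSData K} (hG : IsGenSeq ν G)
    {α β : K} {i j t x : ℕ} (hα0 : α ≠ 0) (hβ0 : β ≠ 0)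
    (heig : ∀ l, IsEigen α β i j t x (G.Q l))
    {f : Poly K} (hinv : Invariant α β i j t x f)
    {c : (ℕ →₀ ℕ) →₀ K} (hadm : ∀ e ∈ c.support, Adm G e)
    (hsum : f = c.sum fun e a => C a * Pmon G e)
    (huniq : ∀ y : (ℕ →₀ ℕ) →₀ K,
      ((∀ e ∈ y.support, Adm G e) ∧ f = y.sum fun e a => C a * Pmon G e) → y = c)
    {a b : ℤ} (hab : b ≡ a * (x : ℤ) [ZMOD (t : ℤ)]) :
    ∀ e ∈ c.support,
      (α ^ (a * (i : ℤ))) ^ e 0 * (β ^ (b * (j : ℤ))) ^ Dsum G e = 1 := by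
  classical
  set u : K := α ^ (a * (i : ℤ)) with hu
  set v : K := β ^ (b * (j : ℤ)) with hv
  have hmem : Hmem α β i j t x (u, v) := ⟨a, b, hab, rfl⟩
  have hev : ∀ k, ∃ lam : K, act u v (G.Q k) = lam • G.Q k :=
    fun k => heig k (u, v) hmem
  have hu0 : u ≠ 0 := zpow_ne_zero _ hα0
  have hv0 : v ≠ 0 := zpow_ne_zero _ hβ0
  set scal : (ℕ →₀ ℕ) → K := fun e => u ^ e 0 * v ^ Dsum G e with hscal
  have hscal0 : ∀ e, scal e ≠ 0 :=
    fun e => mul_ne_zero (pow_ne_zero _ hu0) (pow_ne_zero _ hv0)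
  set c' : (ℕ →₀ ℕ) →₀ K := Finsupp.onFinset c.support (fun e => scal e * c e)
    (fun e h => Finsupp.mem_support_iff.mpr fun h0 => h (by show scal e * c e = 0; rw [h0, mul_zero])) with hc'
  have hc'app : ∀ e, c' e = scal e * c e := fun e => rfl
  have hsupp : c'.support = c.support := by
    ext e
    rw [Finsupp.mem_support_iff, Finsupp.mem_support_iff, hc'app,
      mul_ne_zero_iff]
    exact ⟨fun h => h.2, fun h => ⟨hscal0 e, h⟩⟩
  have hsum' : f = c'.sum fun e a => C a * Pmon G e := by
    conv_lhs => rw [← hinv (u, v) hmem]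
    conv_lhs => rw [hsum]
    rw [Finsupp.sum, Finsupp.sum, hsupp, map_sum]
    refine Finset.sum_congr rfl fun e he => ?_
    rw [map_mul, act_C, act_Pmon hG hev, hc'app, ← mul_assoc, ← C_mul, mul_comm (c e)]
  have hcc : c' = c := huniq c' ⟨by rw [hsupp]; exact hadm, hsum'⟩
  intro e he
  have hce : c e ≠ 0 := Finsupp.mem_support_iff.mp he
  have : scal e * c e = 1 * c e := by
    rw [one_mul, ← hc'app, hcc]
  exact mul_right_cancel₀ hce this

lemma pow_zpow (w : K) (z : ℤ) (c : ℕ) : (w ^ z) ^ c = w ^ (z * (c : ℤ)) := by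
  rw [← zpow_natCast (w ^ z), ← zpow_mul]

/-- description of the valuation semigroup of the localized invariant ring. -/
theorem stmt_3 (K : Type) [Field K] [IsAlgClosed K] [CharZero K]
    (m n : ℕ) (hm : 0 < m) (hn : 0 < n) (α β : K)
    (hα : IsPrimitiveRoot α m) (hβ : IsPrimitiveRoot β n)
    (i j t x : ℕ) (hi : 0 < i) (hj : 0 < j) (ht : 0 < t)
    (him : i ∣ m) (hjn : j ∣ n) (hti : t ∣ m / i) (htj : t ∣ n / j)
    (hxt : Nat.gcd x t = 1) (hx1 : 1 ≤ x) (hxle : x ≤ t)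
    (ν : RatVal (RF K)) (hdom : DominatesRm ν) (hnd : Nondiscrete ν)
    (G : GSData K) (hG : IsGenSeq ν G)
    (heig : ∀ l, IsEigen α β i j t x (G.Q l)) :
    SA ν α β i j t x =
      {q : ℚ | ∃ (l r : ℕ) (jj : ℕ → ℕ),
        (∀ k, 1 ≤ k → k ≤ r → jj k < G.mbar k) ∧
        q = (l : ℚ) * G.γ ν 0 + ∑ k ∈ Finset.Icc 1 r, (jj k : ℚ) * G.γ ν k ∧
        ∀ a b : ℤ, b ≡ a * (x : ℤ) [ZMOD (t : ℤ)] →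
          α ^ ((l : ℤ) * a * (i : ℤ)) *
            β ^ (b * (j : ℤ) * ∑ k ∈ Finset.Icc 1 r, (jj k : ℤ) * (G.d k : ℤ)) = 1} := by
  classical
  have hα0 : α ≠ 0 := hα.ne_zero hm.ne'
  have hβ0 : β ≠ 0 := hβ.ne_zero hn.ne'
  ext q
  constructor
  · rintro ⟨f, g, hf, hfi, hgi, hg, rfl⟩
    have hq : vP ν f - vP ν g = vP ν f := by rw [vP_const ν hdom hg, sub_zero]
    obtain ⟨c, ⟨hadm, hsum⟩, huniq⟩ := hG.hexpand f hf
    obtain ⟨-, e₀, he₀, hve, -⟩ := hG.hval f hf c hadm hsum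
    set r := e₀.support.sup id with hr
    have hsub : e₀.support ⊆ insert 0 (Finset.Icc 1 r) := by
      intro k hk
      rcases Nat.eq_zero_or_pos k with rfl | h
      · exact Finset.mem_insert_self _ _
      · exact Finset.mem_insert_of_mem
          (Finset.mem_Icc.mpr ⟨h, Finset.le_sup (f := id) hk⟩)
    have hD : Dsum G e₀ = ∑ k ∈ Finset.Icc 1 r, G.d k * e₀ k := by
      rw [Dsum]
      apply Finset.sum_subset
      · intro k hk
        obtain ⟨hk0, hks⟩ := Finset.mem_erase.mp hk
        exact Finset.mem_Icc.mpr
          ⟨Nat.one_le_iff_ne_zero.mpr hk0, Finset.le_sup (f := id) hks⟩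
      · intro k hk hnk
        have : e₀ k = 0 := by
          by_contra h
          exact hnk (Finset.mem_erase.mpr
            ⟨Nat.one_le_iff_ne_zero.mp (Finset.mem_Icc.mp hk).1,
              Finsupp.mem_support_iff.mpr h⟩)
        rw [this, mul_zero]
    refine ⟨e₀ 0, r, fun k => e₀ k, fun k hk _ => hadm e₀ he₀ k hk, ?_, ?_⟩
    · rw [hq, hve, evalγ,
        Finsupp.sum_of_support_subset _ hsub _ (fun k _ => by simp),
        Finset.sum_insert (by simp)]
    · intro a b hab
      have h1 := scal_one hG hα0 hβ0 heig hfi hadm hsum huniq hab e₀ he₀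
      rw [hD, pow_zpow, pow_zpow] at h1
      rw [show ((e₀ 0 : ℤ) * a * i) = a * (i : ℤ) * (e₀ 0 : ℤ) by ring]
      rw [show (b * (j : ℤ) * ∑ k ∈ Finset.Icc 1 r, ((e₀ k : ℤ) * (G.d k : ℤ)))
          = b * (j : ℤ) * ((∑ k ∈ Finset.Icc 1 r, G.d k * e₀ k : ℕ) : ℤ) by
        push_cast
        rw [Finset.mul_sum, Finset.mul_sum]
        exact Finset.sum_congr rfl fun k _ => by ring]
      exact h1
  · rintro ⟨l, r, jj, hjm, hq, hchar⟩
    set f : Poly K := G.Q 0 ^ l * ∏ k ∈ Finset.Icc 1 r, G.Q k ^ jj k with hfd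
    have hQne : ∀ k, G.Q k ≠ 0 := Q_ne_zero hG
    have hf : f ≠ 0 := mul_ne_zero (pow_ne_zero _ (hQne 0))
      (Finset.prod_ne_zero_iff.mpr fun k _ => pow_ne_zero _ (hQne k))
    refine ⟨f, 1, hf, ?_, fun p hp => map_one _, by simp, ?_⟩
    · rintro p ⟨a, b, hab, rfl⟩
      set u : K := α ^ (a * (i : ℤ)) with hu
      set v : K := β ^ (b * (j : ℤ)) with hv
      have hmem : Hmem α β i j t x (u, v) := ⟨a, b, hab, rfl⟩
      have hact : act u v f = C (u ^ l * v ^ ∑ k ∈ Finset.Icc 1 r, G.d k * jj k) * f := by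
        rw [hfd, map_mul, map_pow, act_Q0 hG, map_prod]
        rw [Finset.prod_congr rfl (fun k hk => by
          rw [map_pow, act_Qk hG (Finset.mem_Icc.mp hk).1 (heig k (u, v) hmem),
            mul_pow, ← C_pow] :
          ∀ k ∈ Finset.Icc 1 r, act u v (G.Q k ^ jj k)
            = C ((v ^ G.d k) ^ jj k) * G.Q k ^ jj k)]
        rw [Finset.prod_mul_distrib, mul_pow, ← C_pow]
        rw [show ∏ k ∈ Finset.Icc 1 r, (C ((v ^ G.d k) ^ jj k) : Poly K)
            = C (∏ k ∈ Finset.Icc 1 r, (v ^ G.d k) ^ jj k) from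
          (map_prod (C : K →+* Poly K) _ _).symm]
        rw [show ∏ k ∈ Finset.Icc 1 r, (v ^ G.d k) ^ jj k
            = v ^ ∑ k ∈ Finset.Icc 1 r, G.d k * jj k by
          rw [← Finset.prod_pow_eq_pow_sum]
          exact Finset.prod_congr rfl fun k _ => by rw [← pow_mul]]
        rw [C_mul]
        ring
      have hscal : u ^ l * v ^ ∑ k ∈ Finset.Icc 1 r, G.d k * jj k = 1 := by
        have := hchar a b hab
        rw [hu, hv, pow_zpow, pow_zpow]
        rw [show (a * (i : ℤ) * (l : ℤ)) = (l : ℤ) * a * i by ring]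
        rw [show (b * (j : ℤ) * ((∑ k ∈ Finset.Icc 1 r, G.d k * jj k : ℕ) : ℤ))
            = b * (j : ℤ) * ∑ k ∈ Finset.Icc 1 r, ((jj k : ℤ) * (G.d k : ℤ)) by
          push_cast
          rw [Finset.mul_sum, Finset.mul_sum]
          exact Finset.sum_congr rfl fun k _ => by ring]
        exact this
      show act u v f = f
      rw [hact, hscal, C_1, one_mul]
    · rw [vP_one, sub_zero, hq, hfd,
        vP_mul ν (pow_ne_zero _ (hQne 0))
          (Finset.prod_ne_zero_iff.mpr fun k _ => pow_ne_zero _ (hQne k)),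
        vP_pow ν (hQne 0), vP_prod ν _ _ (fun k _ => pow_ne_zero _ (hQne k))]
      rw [Finset.sum_congr rfl fun k _ => vP_pow ν (hQne k) (jj k)]
      rfl

end DuttaPaper
end
end
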